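/- Let θ ∈ [0, π/2) and let f : ℝ^d → ℂ be twice continuously differentiable with bounded second partial derivatives, such that f(x) lies in the sector Σ_θ = {r e^{iψ} : r ≥ 0, |ψ| ≤ θ} for all x. Then for every j, |∂_j f|² ≤ 4 (1 + tan θ)² (sup_{1≤l≤d} ‖∂_l² f‖_∞) · Re f pointwise. -/

import Mathlib

lemma quad {M : ℝ} (g g' g'' : ℝ → ℝ)
    (hg : ∀ t, HasDerivAt g (g' t) t)
    (hg' : ∀ t, HasDerivAt g' (g'' t) t)
    (hpos : ∀ t, 0 ≤ g t)
    (hM : ∀ t, |g'' t| ≤ M) :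
    (g' 0) ^ 2 ≤ 2 * M * g 0 := by
  have hM0 : 0 ≤ M := le_trans (abs_nonneg _) (hM 0)
  -- Lipschitz bound for g'
  have hlip : ∀ s : ℝ, |g' s - g' 0| ≤ M * |s| := by
    intro s
    have := Convex.norm_image_sub_le_of_norm_hasDerivWithin_le
      (f := g') (f' := g'') (s := Set.univ) (C := M)
      (fun t _ => (hg' t).hasDerivWithinAt) (fun t _ => hM t) convex_univ
      (Set.mem_univ 0) (Set.mem_univ s)
    simpa using this
  -- the auxiliary function F
  set F : ℝ → ℝ := fun s => g 0 + g' 0 * s + M / 2 * s ^ 2 - g s with hFdef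
  have hFd : ∀ s, HasDerivAt F (g' 0 + M * s - g' s) s := by
    intro s
    have h1 : HasDerivAt (fun s : ℝ => g 0 + g' 0 * s + M / 2 * s ^ 2 - g s)
        (0 + g' 0 * 1 + M / 2 * (↑2 * s ^ 1) - g' s) s := by
      exact (((hasDerivAt_const s (g 0)).add ((hasDerivAt_id s).const_mul (g' 0))).add
        ((hasDerivAt_pow 2 s).const_mul (M / 2))).sub (hg s)
    convert h1 using 1
    push_cast; ring
  have hFdiff : Differentiable ℝ F := fun s => (hFd s).differentiableAt
  have hderivF : ∀ s, deriv F s = g' 0 + M * s - g' s := fun s => (hFd s).deriv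
  have hF0 : F 0 = 0 := by simp [hFdef]
  have key : ∀ s : ℝ, 0 ≤ g 0 + g' 0 * s + M / 2 * s ^ 2 := by
    intro s
    have hFs : 0 ≤ F s := by
      rcases le_total 0 s with hs | hs
      · have hmono : MonotoneOn F (Set.Ici 0) := by
          apply monotoneOn_of_deriv_nonneg (convex_Ici 0) hFdiff.continuous.continuousOn
            hFdiff.differentiableOn
          intro t ht
          rw [interior_Ici] at ht
          have ht' : (0:ℝ) < t := ht
          have := hlip t
          rw [abs_of_pos ht'] at this
          have h2 := (abs_le.mp this).2
          rw [hderivF]; linarith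
        have := hmono (Set.self_mem_Ici) (Set.mem_Ici.mpr hs) hs
        linarith [hF0 ▸ this]
      · have hanti : AntitoneOn F (Set.Iic 0) := by
          apply antitoneOn_of_deriv_nonpos (convex_Iic 0) hFdiff.continuous.continuousOn
            hFdiff.differentiableOn
          intro t ht
          rw [interior_Iic] at ht
          have ht' : t < 0 := ht
          have := hlip t
          rw [abs_of_neg ht'] at this
          have h2 := (abs_le.mp this).1
          rw [hderivF]; linarith
        have := hanti (Set.mem_Iic.mpr hs) (Set.self_mem_Iic) hs
        linarith [hF0 ▸ this]
    have := hpos s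
    simp only [hFdef] at hFs
    linarith
  rcases eq_or_lt_of_le hM0 with hM1 | hM1
  · -- M = 0
    have hg0 : g' 0 = 0 := by
      by_contra h
      have h1 := key (-(g 0 + 1) / g' 0)
      rw [mul_div_assoc'] at h1
      rw [mul_comm, mul_div_assoc, div_self h, mul_one] at h1
      have := hpos 0
      nlinarith [h1, hM1]
    rw [hg0]
    nlinarith [hpos 0]
  · have h1 := key (-(g' 0) / M)
    have hMne : M ≠ 0 := ne_of_gt hM1
    field_simp at h1
    rw [zero_mul] at h1
    nlinarith [h1, mul_pos hM1 hM1, hpos 0]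



/-- Sectorial version: if `f : ℝ^d → ℂ` is C², takes values in the sector `Σ_θ`,
and `K` bounds all pure second partials `‖∂_l² f‖_∞`, then
`|∂_j f|² ≤ 4 (1 + tan θ)² K · Re f` pointwise. -/
theorem stmt_2 (d : ℕ) (θ : ℝ) (hθ : θ ∈ Set.Ico 0 (Real.pi / 2))
    (f : (Fin d → ℝ) → ℂ) (hf : ContDiff ℝ 2 f)
    (hsec : ∀ x, 0 ≤ (f x).re ∧ |(f x).im| ≤ Real.tan θ * (f x).re)
    (K : ℝ)
    (hK : ∀ l : Fin d, ∀ x,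
      ‖fderiv ℝ (fun y => fderiv ℝ f y (Pi.single l 1)) x (Pi.single l 1)‖ ≤ K)
    (j : Fin d) (x : Fin d → ℝ) :
    ‖fderiv ℝ f x (Pi.single j 1)‖ ^ 2 ≤ 4 * (1 + Real.tan θ) ^ 2 * K * (f x).re := by
  set e : Fin d → ℝ := Pi.single j 1 with he
  set c : ℝ → (Fin d → ℝ) := fun t => x + t • e with hcdef
  have hc : ∀ t, HasDerivAt c e t := by
    intro t
    have : HasDerivAt (fun t : ℝ => x + t • e) ((1:ℝ) • e) t :=
      (((hasDerivAt_id t).smul_const e)).const_add x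
    rw [one_smul] at this; exact this
  have hfd : Differentiable ℝ f := hf.differentiable (by norm_num)
  set F1 : (Fin d → ℝ) → ℂ := fun y => fderiv ℝ f y e with hF1def
  have hF1d : Differentiable ℝ F1 := by
    have h1 : ContDiff ℝ 1 (fderiv ℝ f) := hf.fderiv_right (by norm_num)
    exact (h1.clm_apply contDiff_const).differentiable (by norm_num)
  set φ' : ℝ → ℂ := fun t => F1 (c t) with hφ'def
  set φ'' : ℝ → ℂ := fun t => fderiv ℝ F1 (c t) e with hφ''def
  have hd1 : ∀ t, HasDerivAt (fun t => f (c t)) (φ' t) t :=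
    fun t => (hfd (c t)).hasFDerivAt.comp_hasDerivAt t (hc t)
  have hd2 : ∀ t, HasDerivAt φ' (φ'' t) t :=
    fun t => (hF1d (c t)).hasFDerivAt.comp_hasDerivAt t (hc t)
  have hb : ∀ t, ‖φ'' t‖ ≤ K := fun t => hK j (c t)
  have hK0 : 0 ≤ K := le_trans (norm_nonneg _) (hb 0)
  set T := Real.tan θ with hT
  have hT0 : 0 ≤ T := Real.tan_nonneg_of_nonneg_of_le_pi_div_two hθ.1 (le_of_lt hθ.2)
  -- real and imaginary part derivatives
  have hre : ∀ t, HasDerivAt (fun t => (f (c t)).re) ((φ' t).re) t :=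
    fun t => (Complex.reCLM.hasFDerivAt.comp_hasDerivAt t (hd1 t))
  have him : ∀ t, HasDerivAt (fun t => (f (c t)).im) ((φ' t).im) t :=
    fun t => (Complex.imCLM.hasFDerivAt.comp_hasDerivAt t (hd1 t))
  have hre' : ∀ t, HasDerivAt (fun t => (φ' t).re) ((φ'' t).re) t :=
    fun t => (Complex.reCLM.hasFDerivAt.comp_hasDerivAt t (hd2 t))
  have him' : ∀ t, HasDerivAt (fun t => (φ' t).im) ((φ'' t).im) t :=
    fun t => (Complex.imCLM.hasFDerivAt.comp_hasDerivAt t (hd2 t))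
  -- apply quad to Re f
  have h1 : ((φ' 0).re) ^ 2 ≤ 2 * K * (f (c 0)).re := by
    apply quad _ _ (fun t => (φ'' t).re) hre hre' (fun t => (hsec (c t)).1)
    intro t
    exact le_trans (Complex.abs_re_le_norm _) (hb t)
  -- apply quad to T Re f + Im f
  have h2 : (T * (φ' 0).re + (φ' 0).im) ^ 2 ≤
      2 * ((1 + T) * K) * (T * (f (c 0)).re + (f (c 0)).im) := by
    apply quad _ (fun t => T * (φ' t).re + (φ' t).im) (fun t => T * (φ'' t).re + (φ'' t).im)
      (fun t => ((hre t).const_mul T).add (him t))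
      (fun t => ((hre' t).const_mul T).add (him' t))
    · intro t
      have := (hsec (c t)).2
      have := (abs_le.mp this).1
      show 0 ≤ T * (f (c t)).re + (f (c t)).im
      linarith
    · intro t
      have h3 : |T * (φ'' t).re + (φ'' t).im| ≤ T * |(φ'' t).re| + |(φ'' t).im| := by
        calc |T * (φ'' t).re + (φ'' t).im| ≤ |T * (φ'' t).re| + |(φ'' t).im| := abs_add_le _ _
        _ = T * |(φ'' t).re| + |(φ'' t).im| := by rw [abs_mul, abs_of_nonneg hT0]
      have h4 : |(φ'' t).re| ≤ K := le_trans (Complex.abs_re_le_norm _) (hb t)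
      have h5 : |(φ'' t).im| ≤ K := le_trans (Complex.abs_im_le_norm _) (hb t)
      nlinarith [mul_le_mul_of_nonneg_left h4 hT0]
  -- apply quad to T Re f - Im f
  have h3 : (T * (φ' 0).re - (φ' 0).im) ^ 2 ≤
      2 * ((1 + T) * K) * (T * (f (c 0)).re - (f (c 0)).im) := by
    apply quad _ (fun t => T * (φ' t).re - (φ' t).im) (fun t => T * (φ'' t).re - (φ'' t).im)
      (fun t => ((hre t).const_mul T).sub (him t))
      (fun t => ((hre' t).const_mul T).sub (him' t))
    · intro t
      have := (hsec (c t)).2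
      have := (abs_le.mp this).2
      show 0 ≤ T * (f (c t)).re - (f (c t)).im
      linarith
    · intro t
      have h3 : |T * (φ'' t).re - (φ'' t).im| ≤ T * |(φ'' t).re| + |(φ'' t).im| := by
        calc |T * (φ'' t).re - (φ'' t).im| ≤ |T * (φ'' t).re| + |(φ'' t).im| := abs_sub _ _
        _ = T * |(φ'' t).re| + |(φ'' t).im| := by rw [abs_mul, abs_of_nonneg hT0]
      have h4 : |(φ'' t).re| ≤ K := le_trans (Complex.abs_re_le_norm _) (hb t)
      have h5 : |(φ'' t).im| ≤ K := le_trans (Complex.abs_im_le_norm _) (hb t)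
      nlinarith [mul_le_mul_of_nonneg_left h4 hT0]
  have hc0 : c 0 = x := by simp [hcdef]
  rw [hc0] at h1 h2 h3
  have hgoal : fderiv ℝ f x (Pi.single j 1) = φ' 0 := by
    rw [show φ' 0 = fderiv ℝ f (c 0) e from rfl, hc0]
  rw [hgoal]
  have hnorm : ‖φ' 0‖ ^ 2 = (φ' 0).re ^ 2 + (φ' 0).im ^ 2 := by
    rw [Complex.sq_norm, Complex.normSq_apply]; ring
  rw [hnorm]
  have hu : 0 ≤ (f x).re := (hsec x).1
  nlinarith [h1, h2, h3, mul_nonneg hK0 hu, mul_nonneg (mul_nonneg hT0 hK0) hu,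
    mul_nonneg (mul_nonneg (mul_nonneg hT0 hT0) hK0) hu, sq_nonneg ((φ' 0).re),
    mul_nonneg (mul_nonneg hT0 hT0) (sq_nonneg ((φ' 0).re))]
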